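/- arXiv:2011.11927 — 3 statements merged into one kernel-verified Lean document; each statement's English description precedes it below -/
import Mathlib

section
/- Let Q := (I − η L ⊗ I_N) D where D is block diagonal with blocks I_N − μ H_k^T H_k, 0 < η < 1/λ_max(L), and λ_max(H_k^T H_k) < 1/μ for all k. For iterates satisfying χ^{(t+1)} − χ* = Q(χ^{(t)} − χ*), one has ‖χ^{(t+1)} − χ*‖ ≤ λ_max(D) ‖χ^{(t)} − χ*‖, and λ_max(D) < 1 provided each H_k^T H_k has positive minimum eigenvalue. -/
open Matrix Kronecker


section Helpers

variable {n : Type*} [Fintype n] [DecidableEq n]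

lemma myPosSemidef_of_spectrum_nonneg {M : Matrix n n ℝ} (hM : M.IsHermitian)
    (h : ∀ x ∈ spectrum ℝ M, 0 ≤ x) : M.PosSemidef :=
  hM.posSemidef_iff_eigenvalues_nonneg.mpr fun i => h _ (hM.eigenvalues_mem_spectrum_real i)

lemma mySpectrum_nonneg_of_posSemidef {M : Matrix n n ℝ} (hM : M.PosSemidef) :
    ∀ x ∈ spectrum ℝ M, 0 ≤ x := by
  intro x hx
  rw [hM.isHermitian.spectrum_real_eq_range_eigenvalues] at hx
  obtain ⟨i, rfl⟩ := hx
  exact hM.eigenvalues_nonneg i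

lemma mySpectrum_pos_of_posDef {M : Matrix n n ℝ} (hM : M.PosDef) :
    ∀ x ∈ spectrum ℝ M, 0 < x := by
  intro x hx
  rw [hM.isHermitian.spectrum_real_eq_range_eigenvalues] at hx
  obtain ⟨i, rfl⟩ := hx
  exact hM.eigenvalues_pos i

lemma myPosDef_of_spectrum_pos {M : Matrix n n ℝ} (hM : M.IsHermitian)
    (h : ∀ x ∈ spectrum ℝ M, 0 < x) : M.PosDef := by
  have hpsd : M.PosSemidef := myPosSemidef_of_spectrum_nonneg hM (fun x hx => (h x hx).le)
  have hdet : IsUnit M := by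
    rw [Matrix.isUnit_iff_isUnit_det]
    rw [hM.det_eq_prod_eigenvalues]
    refine IsUnit.mk0 _ ?_
    refine ne_of_gt (Finset.prod_pos (fun i _ => ?_))
    exact_mod_cast h _ (hM.eigenvalues_mem_spectrum_real i)
  refine .of_dotProduct_mulVec_pos hM fun x hx => ?_
  rcases (hpsd.dotProduct_mulVec_nonneg x).lt_or_eq with hlt | heq
  · exact hlt
  · exfalso
    have h0 : M *ᵥ x = 0 := (hpsd.dotProduct_mulVec_zero_iff x).mp heq.symm
    have hinj := Matrix.mulVec_injective_iff_isUnit.mpr hdet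
    exact hx (hinj (show M *ᵥ x = M *ᵥ 0 by simp [h0]))

lemma myPosSemidef_smul {M : Matrix n n ℝ} (hM : M.PosSemidef) {c : ℝ} (hc : 0 ≤ c) :
    (c • M).PosSemidef := by
  refine .of_dotProduct_mulVec_nonneg ?_ ?_
  · show (c • M)ᴴ = c • M
    rw [Matrix.conjTranspose_smul, star_trivial, hM.1.eq]
  · intro x
    rw [Matrix.smul_mulVec, dotProduct_smul, smul_eq_mul]
    exact mul_nonneg hc (hM.dotProduct_mulVec_nonneg x)

lemma myPosDef_smul {M : Matrix n n ℝ} (hM : M.PosDef) {c : ℝ} (hc : 0 < c) :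
    (c • M).PosDef := by
  refine .of_dotProduct_mulVec_pos ?_ ?_
  · show (c • M)ᴴ = c • M
    rw [Matrix.conjTranspose_smul, star_trivial, hM.1.eq]
  · intro x hx
    rw [Matrix.smul_mulVec, dotProduct_smul, smul_eq_mul]
    exact mul_pos hc (hM.dotProduct_mulVec_pos hx)

lemma myNorm_mulVec_le {M : Matrix n n ℝ} (hM : M.IsHermitian) {c : ℝ} (hc : 0 ≤ c)
    (h : ∀ x ∈ spectrum ℝ M, |x| ≤ c) (v : n → ℝ) :
    Real.sqrt (∑ i, (M *ᵥ v) i ^ 2) ≤ c * Real.sqrt (∑ i, v i ^ 2) := by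
  obtain ⟨U, ev, hU1, hU2, hrep, hmem⟩ : ∃ (U : Matrix n n ℝ) (ev : n → ℝ),
      U * star U = 1 ∧ star U * U = 1 ∧
      M = U * Matrix.diagonal ev * star U ∧ ∀ i, ev i ∈ spectrum ℝ M := by
    refine ⟨hM.eigenvectorUnitary, hM.eigenvalues,
      Matrix.mem_unitaryGroup_iff.mp hM.eigenvectorUnitary.2,
      Matrix.mem_unitaryGroup_iff'.mp hM.eigenvectorUnitary.2, ?_,
      fun i => hM.eigenvalues_mem_spectrum_real i⟩
    have := hM.spectral_theorem
    rwa [RCLike.ofReal_real_eq_id, Function.id_comp] at this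
  have hMM : c ^ 2 • (1 : Matrix n n ℝ) - M * M
      = U * Matrix.diagonal (fun i => c ^ 2 - ev i ^ 2) * star U := by
    have key : (U * Matrix.diagonal ev * star U)
        * (U * Matrix.diagonal ev * star U)
        = U * (Matrix.diagonal ev * Matrix.diagonal ev) * star U := by
      calc (U * Matrix.diagonal ev * star U)
            * (U * Matrix.diagonal ev * star U)
          = U * Matrix.diagonal ev * (star U * U)
              * Matrix.diagonal ev * star U := by
            simp only [Matrix.mul_assoc]
        _ = U * (Matrix.diagonal ev * Matrix.diagonal ev) * star U := by
            rw [hU2, Matrix.mul_one]; simp only [Matrix.mul_assoc]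
    have h1 : c ^ 2 • (1 : Matrix n n ℝ)
        = U * (c ^ 2 • (1 : Matrix n n ℝ)) * star U := by
      rw [Matrix.mul_smul, Matrix.smul_mul, Matrix.mul_one, hU1]
    rw [hrep, key, h1]
    rw [← Matrix.sub_mul, ← Matrix.mul_sub]
    congr 2
    rw [Matrix.diagonal_mul_diagonal]
    have : c ^ 2 • (1 : Matrix n n ℝ) = Matrix.diagonal (fun _ => c ^ 2) := by
      ext i j
      by_cases hij : i = j <;> simp [Matrix.diagonal_apply, Matrix.one_apply, hij]
    rw [this, Matrix.diagonal_sub]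
    congr 1
    funext i
    ring
  have hPSD : (c ^ 2 • (1 : Matrix n n ℝ) - M * M).PosSemidef := by
    rw [hMM]
    have hd : (Matrix.diagonal fun i => c ^ 2 - ev i ^ 2).PosSemidef := by
      refine Matrix.posSemidef_diagonal_iff.mpr (fun i => ?_)
      have hi := h _ (hmem i)
      have := abs_le.mp hi
      nlinarith [this.1, this.2]
    have := hd.mul_mul_conjTranspose_same U
    rwa [← Matrix.star_eq_conjTranspose] at this
  have key : ∑ i, (M *ᵥ v) i ^ 2 ≤ c ^ 2 * ∑ i, v i ^ 2 := by
    have h0 := hPSD.dotProduct_mulVec_nonneg v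
    have hdp : ∀ w : n → ℝ, w ⬝ᵥ w = ∑ i, w i ^ 2 := by
      intro w
      simp [dotProduct, pow_two]
    have hexp : star v ⬝ᵥ ((c ^ 2 • (1 : Matrix n n ℝ) - M * M) *ᵥ v)
        = c ^ 2 * (∑ i, v i ^ 2) - ∑ i, (M *ᵥ v) i ^ 2 := by
      rw [Matrix.sub_mulVec, dotProduct_sub, star_trivial]
      congr 1
      · rw [Matrix.smul_mulVec, Matrix.one_mulVec, dotProduct_smul, smul_eq_mul, hdp]
      · rw [← Matrix.mulVec_mulVec, dotProduct_mulVec, ← Matrix.mulVec_transpose,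
          show Mᵀ = M from by rw [← Matrix.conjTranspose_eq_transpose_of_trivial]; exact hM.eq,
          hdp]
    rw [hexp] at h0
    linarith
  have h1 : Real.sqrt (∑ i, (M *ᵥ v) i ^ 2) ≤ Real.sqrt (c ^ 2 * ∑ i, v i ^ 2) :=
    Real.sqrt_le_sqrt key
  rwa [Real.sqrt_mul (sq_nonneg c), Real.sqrt_sq hc] at h1

end Helpers

section Helpers2

open Matrix Kronecker

variable {k n ι : Type*} [Fintype k] [Fintype n] [Fintype ι]
  [DecidableEq k] [DecidableEq n] [DecidableEq ι]

lemma myKron_one_posSemidef {A : Matrix k k ℝ} (hA : A.PosSemidef) :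
    (A ⊗ₖ (1 : Matrix n n ℝ)).PosSemidef := by
  refine .of_dotProduct_mulVec_nonneg ?_ ?_
  · show (A ⊗ₖ (1 : Matrix n n ℝ))ᴴ = _
    ext ⟨i, p⟩ ⟨j, q⟩
    have hAij : A j i = A i j := by
      have := congrFun (congrFun hA.1.eq i) j
      simpa using this
    simp [Matrix.conjTranspose_apply, Matrix.kroneckerMap_apply, Matrix.one_apply, hAij,
      eq_comm]
  · intro x
    have hmv : ∀ (i : k) (q : n), ((A ⊗ₖ (1 : Matrix n n ℝ)) *ᵥ x) (i, q)
        = (A *ᵥ fun j => x (j, q)) i := by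
      intro i q
      simp [Matrix.mulVec, dotProduct, Fintype.sum_prod_type, Matrix.kroneckerMap_apply,
        Matrix.one_apply, mul_ite, mul_zero, mul_one, ite_mul, zero_mul,
        Finset.sum_ite_eq, Finset.sum_ite_eq']
    have hq : star x ⬝ᵥ ((A ⊗ₖ (1 : Matrix n n ℝ)) *ᵥ x)
        = ∑ q : n, star (fun i => x (i, q)) ⬝ᵥ (A *ᵥ fun j => x (j, q)) := by
      simp only [star_trivial, dotProduct, Fintype.sum_prod_type_right]
      exact Finset.sum_congr rfl fun q _ => Finset.sum_congr rfl fun i _ => by rw [hmv]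
    rw [hq]
    exact Finset.sum_nonneg fun q _ => hA.dotProduct_mulVec_nonneg _

lemma myBlockDiagonal_posDef {B : ι → Matrix n n ℝ} (hB : ∀ j, (B j).PosDef) :
    (Matrix.blockDiagonal B).PosDef := by
  refine .of_dotProduct_mulVec_pos ?_ ?_
  · show (Matrix.blockDiagonal B)ᴴ = _
    rw [Matrix.blockDiagonal_conjTranspose]
    exact congrArg _ (funext fun j => (hB j).1.eq)
  · intro x hx
    have hmv : ∀ (i : n) (r : ι), (Matrix.blockDiagonal B *ᵥ x) (i, r)
        = (B r *ᵥ fun j => x (j, r)) i := by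
      intro i r
      simp [Matrix.mulVec, dotProduct, Fintype.sum_prod_type, Matrix.blockDiagonal_apply,
        mul_ite, mul_zero, mul_one, ite_mul, zero_mul,
        Finset.sum_ite_eq, Finset.sum_ite_eq']
    have hq : star x ⬝ᵥ (Matrix.blockDiagonal B *ᵥ x)
        = ∑ r : ι, star (fun i => x (i, r)) ⬝ᵥ (B r *ᵥ fun j => x (j, r)) := by
      simp only [star_trivial, dotProduct, Fintype.sum_prod_type_right]
      exact Finset.sum_congr rfl fun r _ => Finset.sum_congr rfl fun i _ => by rw [hmv]
    rw [hq]
    obtain ⟨⟨i0, r0⟩, hik⟩ : ∃ p, x p ≠ 0 := Function.ne_iff.mp hx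
    refine Finset.sum_pos' (fun r _ => ((hB r).posSemidef).dotProduct_mulVec_nonneg _) ⟨r0, Finset.mem_univ _, ?_⟩
    exact (hB r0).dotProduct_mulVec_pos (fun hzero => hik (congrFun hzero i0))

lemma myPosDef_submatrix_equiv {M : Matrix n n ℝ} (hM : M.PosDef) (e : k ≃ n) :
    (M.submatrix e e).PosDef := by
  refine .of_dotProduct_mulVec_pos ?_ ?_
  · exact hM.1.submatrix e
  · intro x hx
    rw [Matrix.submatrix_mulVec_equiv]
    set y : n → ℝ := x ∘ ⇑e.symm with hy
    have hxy : ∀ i, x i = y (e i) := by intro i; simp [hy]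
    have hkey : star x ⬝ᵥ ((M *ᵥ y) ∘ ⇑e) = star y ⬝ᵥ (M *ᵥ y) := by
      simp only [star_trivial, dotProduct, Function.comp_apply]
      calc ∑ i, x i * (M *ᵥ y) (e i) = ∑ i, y (e i) * (M *ᵥ y) (e i) :=
            Finset.sum_congr rfl fun i _ => by rw [← hxy]
        _ = ∑ j, y j * (M *ᵥ y) j := Equiv.sum_comp e (fun j => y j * (M *ᵥ y) j)
    rw [hkey]
    refine hM.dotProduct_mulVec_pos (fun hzero => hx (funext fun i => ?_))
    rw [hxy i, hzero]; rfl

lemma mySub_kron (A B : Matrix k k ℝ) (C : Matrix n n ℝ) :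
    (A - B) ⊗ₖ C = A ⊗ₖ C - B ⊗ₖ C := by
  ext ⟨i, p⟩ ⟨j, q⟩
  simp [Matrix.kroneckerMap_apply, sub_mul]

end Helpers2

/-- Let `Q := (I - η (L ⊗ I_N)) * D` with `D` block diagonal with blocks
`I_N - μ H_kᵀ H_k`, `0 < η < 1/λ_max(L)` and `λ_max(H_kᵀ H_k) < 1/μ` for all `k`. For iterates
satisfying `χ^{(t+1)} - χ* = Q (χ^{(t)} - χ*)`, the Euclidean norm of the error contracts by a
factor `λ_max(D)`, and `λ_max(D) < 1` provided each `H_kᵀ H_k` has positive minimum eigenvalue. -/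
theorem cooperative_LMS_linear_convergence
    (K m N : ℕ) (hK : 0 < K) (hN : 0 < N)
    (G : SimpleGraph (Fin K)) [DecidableRel G.Adj]
    (lmax : ℝ) (hlmax : IsGreatest (spectrum ℝ (G.lapMatrix ℝ)) lmax)
    (η : ℝ) (hη : 0 < η) (hηlt : η < 1 / lmax)
    (H : Fin K → Matrix (Fin m) (Fin N) ℝ)
    (μc : ℝ) (hμ : 0 < μc)
    (hspec : ∀ k : Fin K, ∀ x ∈ spectrum ℝ ((H k)ᵀ * H k), x < 1 / μc)
    (hmin : ∀ k : Fin K, ∀ x ∈ spectrum ℝ ((H k)ᵀ * H k), 0 < x)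
    (D : Matrix (Fin K × Fin N) (Fin K × Fin N) ℝ)
    (hD : D = (Matrix.blockDiagonal
        (fun k : Fin K => (1 : Matrix (Fin N) (Fin N) ℝ) - μc • ((H k)ᵀ * H k))).submatrix
          Prod.swap Prod.swap)
    (Q : Matrix (Fin K × Fin N) (Fin K × Fin N) ℝ)
    (hQ : Q = ((1 : Matrix (Fin K × Fin N) (Fin K × Fin N) ℝ)
        - η • (G.lapMatrix ℝ ⊗ₖ (1 : Matrix (Fin N) (Fin N) ℝ))) * D)
    (dmax : ℝ) (hdmax : IsGreatest (spectrum ℝ D) dmax)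
    (χ : ℕ → (Fin K × Fin N → ℝ)) (χs : Fin K × Fin N → ℝ)
    (hiter : ∀ t : ℕ, χ (t + 1) - χs = Q *ᵥ (χ t - χs)) :
    (∀ t : ℕ,
      Real.sqrt (∑ i, (χ (t + 1) - χs) i ^ 2)
        ≤ dmax * Real.sqrt (∑ i, (χ t - χs) i ^ 2))
    ∧ dmax < 1 := by
  haveI : Nontrivial (Matrix (Fin N) (Fin N) ℝ) := by
    refine ⟨0, 1, fun hzo => ?_⟩
    have := congrFun (congrFun hzo ⟨0, hN⟩) ⟨0, hN⟩
    simp [Matrix.one_apply, Matrix.zero_apply] at this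
  -- the sensing matrices
  have hAherm : ∀ j : Fin K, ((H j)ᵀ * H j).IsHermitian := by
    intro j
    have := Matrix.isHermitian_conjTranspose_mul_self (H j)
    rwa [Matrix.conjTranspose_eq_transpose_of_trivial] at this
  have hApos : ∀ j, ((H j)ᵀ * H j).PosDef := fun j =>
    myPosDef_of_spectrum_pos (hAherm j) (hmin j)
  -- the diagonal blocks are positive definite
  have hBherm : ∀ j : Fin K,
      ((1 : Matrix (Fin N) (Fin N) ℝ) - μc • ((H j)ᵀ * H j)).IsHermitian := by
    intro j
    refine Matrix.isHermitian_one.sub ?_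
    show (μc • ((H j)ᵀ * H j))ᴴ = _
    rw [Matrix.conjTranspose_smul, star_trivial, (hAherm j).eq]
  have hBpos : ∀ j, ((1 : Matrix (Fin N) (Fin N) ℝ) - μc • ((H j)ᵀ * H j)).PosDef := by
    intro j
    refine myPosDef_of_spectrum_pos (hBherm j) ?_
    intro x hx
    have hNE : (spectrum ℝ ((H j)ᵀ * H j)).Nonempty :=
      ⟨_, (hAherm j).eigenvalues_mem_spectrum_real ⟨0, hN⟩⟩
    rw [show (1 : Matrix (Fin N) (Fin N) ℝ) - μc • ((H j)ᵀ * H j)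
        = (algebraMap ℝ (Matrix (Fin N) (Fin N) ℝ)) 1 - μc • ((H j)ᵀ * H j) by rw [_root_.map_one],
      ← spectrum.singleton_sub_eq, spectrum.smul_eq_smul μc _ hNE] at hx
    obtain ⟨a, ha, b, hb, rfl⟩ := Set.mem_sub.mp hx
    rw [Set.mem_singleton_iff] at ha
    subst ha
    obtain ⟨s, hs, rfl⟩ := hb
    have hslt := hspec j s hs
    rw [lt_div_iff₀ hμ] at hslt
    simp only [smul_eq_mul]
    nlinarith
  -- D is positive definite and 1 - D is positive definite
  have hpc : (Prod.swap : Fin K × Fin N → Fin N × Fin K)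
      = ⇑(Equiv.prodComm (Fin K) (Fin N)) := rfl
  have hDposd : D.PosDef := by
    rw [hD, hpc]
    exact myPosDef_submatrix_equiv (myBlockDiagonal_posDef hBpos) _
  have h1Dposd : ((1 : Matrix (Fin K × Fin N) (Fin K × Fin N) ℝ) - D).PosDef := by
    have hstep : (Matrix.blockDiagonal fun j : Fin K =>
        (1 : Matrix (Fin N) (Fin N) ℝ) - μc • ((H j)ᵀ * H j))
        = 1 - Matrix.blockDiagonal (fun j : Fin K => μc • ((H j)ᵀ * H j)) := by
      rw [← Matrix.blockDiagonal_one, ← Matrix.blockDiagonal_sub]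
      rfl
    have heq : (1 : Matrix (Fin K × Fin N) (Fin K × Fin N) ℝ) - D
        = (Matrix.blockDiagonal fun j : Fin K => μc • ((H j)ᵀ * H j)).submatrix
            (Equiv.prodComm (Fin K) (Fin N)) (Equiv.prodComm (Fin K) (Fin N)) := by
      rw [hD, hpc, hstep, Matrix.submatrix_sub]
      simp only [Pi.sub_apply]
      rw [Matrix.submatrix_one_equiv, sub_sub_cancel]
    rw [heq]
    exact myPosDef_submatrix_equiv
      (myBlockDiagonal_posDef fun j => myPosDef_smul (hApos j) hμ) _
  have hdmax_pos : 0 < dmax := mySpectrum_pos_of_posDef hDposd dmax hdmax.1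
  have hdmax1 : dmax < 1 := by
    have hmem : (1 : ℝ) - dmax
        ∈ spectrum ℝ ((1 : Matrix (Fin K × Fin N) (Fin K × Fin N) ℝ) - D) := by
      rw [show (1 : Matrix (Fin K × Fin N) (Fin K × Fin N) ℝ) - D
          = (algebraMap ℝ (Matrix (Fin K × Fin N) (Fin K × Fin N) ℝ)) 1 - D by rw [_root_.map_one],
        ← spectrum.singleton_sub_eq]
      exact Set.sub_mem_sub (Set.mem_singleton 1) hdmax.1
    have := mySpectrum_pos_of_posDef h1Dposd _ hmem
    linarith
  have hDspec : ∀ x ∈ spectrum ℝ D, |x| ≤ dmax := by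
    intro x hx
    rw [abs_of_pos (mySpectrum_pos_of_posDef hDposd x hx)]
    exact hdmax.2 hx
  -- the Laplacian part
  have hLpsd : (G.lapMatrix ℝ).PosSemidef := SimpleGraph.posSemidef_lapMatrix ℝ G
  have hlm_pos : 0 < lmax := one_div_pos.mp (hη.trans hηlt)
  have hηl1 : η * lmax < 1 := (lt_div_iff₀ hlm_pos).mp hηlt
  have hM0 : (lmax • (1 : Matrix (Fin K) (Fin K) ℝ) - G.lapMatrix ℝ).PosSemidef := by
    refine myPosSemidef_of_spectrum_nonneg ?_ ?_
    · refine Matrix.IsHermitian.sub ?_ hLpsd.1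
      show (lmax • (1 : Matrix (Fin K) (Fin K) ℝ))ᴴ = _
      rw [Matrix.conjTranspose_smul, star_trivial, Matrix.conjTranspose_one]
    · intro x hx
      rw [show lmax • (1 : Matrix (Fin K) (Fin K) ℝ) - G.lapMatrix ℝ
          = (algebraMap ℝ (Matrix (Fin K) (Fin K) ℝ)) lmax - G.lapMatrix ℝ by
            rw [Algebra.algebraMap_eq_smul_one],
        ← spectrum.singleton_sub_eq] at hx
      obtain ⟨a, ha, b, hb, rfl⟩ := Set.mem_sub.mp hx
      rw [Set.mem_singleton_iff] at ha
      subst ha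
      have := hlmax.2 hb
      linarith
  have hkron : ((lmax • (1 : Matrix (Fin K) (Fin K) ℝ) - G.lapMatrix ℝ)
        ⊗ₖ (1 : Matrix (Fin N) (Fin N) ℝ))
      = lmax • (1 : Matrix (Fin K × Fin N) (Fin K × Fin N) ℝ)
        - G.lapMatrix ℝ ⊗ₖ (1 : Matrix (Fin N) (Fin N) ℝ) := by
    rw [mySub_kron, Matrix.smul_kronecker, Matrix.one_kronecker_one]
  have hkronPSD : (lmax • (1 : Matrix (Fin K × Fin N) (Fin K × Fin N) ℝ)
      - G.lapMatrix ℝ ⊗ₖ (1 : Matrix (Fin N) (Fin N) ℝ)).PosSemidef := by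
    rw [← hkron]
    exact myKron_one_posSemidef hM0
  have hPps : ((1 : Matrix (Fin K × Fin N) (Fin K × Fin N) ℝ)
      - η • (G.lapMatrix ℝ ⊗ₖ (1 : Matrix (Fin N) (Fin N) ℝ))).PosSemidef := by
    have hPeq : (1 : Matrix (Fin K × Fin N) (Fin K × Fin N) ℝ)
        - η • (G.lapMatrix ℝ ⊗ₖ (1 : Matrix (Fin N) (Fin N) ℝ))
        = (1 - η * lmax) • (1 : Matrix (Fin K × Fin N) (Fin K × Fin N) ℝ)
          + η • (lmax • (1 : Matrix (Fin K × Fin N) (Fin K × Fin N) ℝ)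
            - G.lapMatrix ℝ ⊗ₖ (1 : Matrix (Fin N) (Fin N) ℝ)) := by
      module
    rw [hPeq]
    exact (myPosSemidef_smul Matrix.PosSemidef.one (by linarith)).add
      (myPosSemidef_smul hkronPSD hη.le)
  have h1Pps : ((1 : Matrix (Fin K × Fin N) (Fin K × Fin N) ℝ)
      - ((1 : Matrix (Fin K × Fin N) (Fin K × Fin N) ℝ)
        - η • (G.lapMatrix ℝ ⊗ₖ (1 : Matrix (Fin N) (Fin N) ℝ)))).PosSemidef := by
    rw [sub_sub_cancel]
    exact myPosSemidef_smul (myKron_one_posSemidef hLpsd) hη.le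
  have hPspec : ∀ x ∈ spectrum ℝ ((1 : Matrix (Fin K × Fin N) (Fin K × Fin N) ℝ)
      - η • (G.lapMatrix ℝ ⊗ₖ (1 : Matrix (Fin N) (Fin N) ℝ))), |x| ≤ 1 := by
    intro x hx
    have h1 : 0 ≤ x := mySpectrum_nonneg_of_posSemidef hPps x hx
    have h2 : x ≤ 1 := by
      have hmem : (1 : ℝ) - x ∈ spectrum ℝ
          ((1 : Matrix (Fin K × Fin N) (Fin K × Fin N) ℝ)
            - ((1 : Matrix (Fin K × Fin N) (Fin K × Fin N) ℝ)
              - η • (G.lapMatrix ℝ ⊗ₖ (1 : Matrix (Fin N) (Fin N) ℝ)))) := by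
        rw [show (1 : Matrix (Fin K × Fin N) (Fin K × Fin N) ℝ)
            - ((1 : Matrix (Fin K × Fin N) (Fin K × Fin N) ℝ)
              - η • (G.lapMatrix ℝ ⊗ₖ (1 : Matrix (Fin N) (Fin N) ℝ)))
            = (algebraMap ℝ (Matrix (Fin K × Fin N) (Fin K × Fin N) ℝ)) 1
              - ((1 : Matrix (Fin K × Fin N) (Fin K × Fin N) ℝ)
                - η • (G.lapMatrix ℝ ⊗ₖ (1 : Matrix (Fin N) (Fin N) ℝ))) by rw [_root_.map_one],
          ← spectrum.singleton_sub_eq]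
        exact Set.sub_mem_sub (Set.mem_singleton 1) hx
      have := mySpectrum_nonneg_of_posSemidef h1Pps _ hmem
      linarith
    rw [abs_of_nonneg h1]
    exact h2
  refine ⟨fun t => ?_, hdmax1⟩
  rw [hiter t, hQ, ← Matrix.mulVec_mulVec]
  calc Real.sqrt (∑ i, (((1 : Matrix (Fin K × Fin N) (Fin K × Fin N) ℝ)
        - η • (G.lapMatrix ℝ ⊗ₖ (1 : Matrix (Fin N) (Fin N) ℝ)))
          *ᵥ (D *ᵥ (χ t - χs))) i ^ 2)
      ≤ 1 * Real.sqrt (∑ i, (D *ᵥ (χ t - χs)) i ^ 2) :=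
        myNorm_mulVec_le hPps.1 zero_le_one hPspec _
    _ = Real.sqrt (∑ i, (D *ᵥ (χ t - χs)) i ^ 2) := one_mul _
    _ ≤ dmax * Real.sqrt (∑ i, (χ t - χs) i ^ 2) :=
        myNorm_mulVec_le hDposd.1 hdmax_pos.le hDspec _
end

section
/- The spectral radius of a product of two symmetric matrices P, D with ‖P‖ = 1 satisfies ρ(PD) ≤ λ_max(D) when D is positive definite; consequently λ_max(PD) ≤ 1 − μ min_k λ_min(H_k^T H_k) in the cooperative LMS setting. -/
open Matrix Kronecker

open scoped ComplexOrder

lemma specAux_mem_iff {𝕜 : Type*} [Field 𝕜] {n : Type*} [Fintype n] [DecidableEq n]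
    (M : Matrix n n 𝕜) (r : 𝕜) :
    r ∈ spectrum 𝕜 M ↔ ∃ v, v ≠ 0 ∧ M *ᵥ v = r • v := by
  rw [spectrum.mem_iff, Matrix.isUnit_iff_isUnit_det, isUnit_iff_ne_zero, not_not,
    ← Matrix.exists_mulVec_eq_zero_iff]
  constructor
  · rintro ⟨v, hv, h⟩
    refine ⟨v, hv, ?_⟩
    have : (algebraMap 𝕜 (Matrix n n 𝕜) r) *ᵥ v - M *ᵥ v = 0 := by
      rw [← Matrix.sub_mulVec, h]
    have h2 : (algebraMap 𝕜 (Matrix n n 𝕜) r) *ᵥ v = r • v := by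
      simp [Algebra.algebraMap_eq_smul_one, Matrix.smul_mulVec]
    rw [h2] at this
    exact sub_eq_zero.mp this |>.symm
  · rintro ⟨v, hv, h⟩
    refine ⟨v, hv, ?_⟩
    have h2 : (algebraMap 𝕜 (Matrix n n 𝕜) r) *ᵥ v = r • v := by
      simp [Algebra.algebraMap_eq_smul_one, Matrix.smul_mulVec]
    rw [Matrix.sub_mulVec, h2, h, sub_self]

lemma specAux_real_iff {n : Type*} [Fintype n] [DecidableEq n] (M : Matrix n n ℝ) (r : ℝ) :
    (↑r : ℂ) ∈ spectrum ℂ (M.map Complex.ofReal) ↔ r ∈ spectrum ℝ M := by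
  rw [spectrum.mem_iff, spectrum.mem_iff, Matrix.isUnit_iff_isUnit_det,
    Matrix.isUnit_iff_isUnit_det, isUnit_iff_ne_zero, isUnit_iff_ne_zero]
  have key : algebraMap ℂ (Matrix n n ℂ) ↑r - M.map Complex.ofReal
      = (algebraMap ℝ (Matrix n n ℝ) r - M).map Complex.ofReal := by
    ext i j
    simp [Matrix.algebraMap_matrix_apply, apply_ite]
  rw [key]
  have hdet := RingHom.map_det Complex.ofRealHom ((algebraMap ℝ (Matrix n n ℝ)) r - M)
  rw [RingHom.mapMatrix_apply] at hdet
  rw [show (⇑Complex.ofRealHom : ℝ → ℂ) = Complex.ofReal from rfl] at hdet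
  rw [← hdet]
  simp

lemma specAux_shift {n : Type*} [Fintype n] [DecidableEq n] (E : Matrix n n ℝ) (c r : ℝ) :
    r ∈ spectrum ℝ (c • (1 : Matrix n n ℝ) - E) ↔ c - r ∈ spectrum ℝ E := by
  rw [specAux_mem_iff, specAux_mem_iff]
  constructor
  · rintro ⟨v, hv, h⟩
    refine ⟨v, hv, ?_⟩
    rw [Matrix.sub_mulVec, Matrix.smul_mulVec, Matrix.one_mulVec] at h
    rw [sub_smul]
    linear_combination (norm := module) -h
  · rintro ⟨v, hv, h⟩
    refine ⟨v, hv, ?_⟩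
    rw [Matrix.sub_mulVec, Matrix.smul_mulVec, Matrix.one_mulVec, h, sub_smul]
    module

lemma quadform_le_of_spectrum_le {n : Type*} [Fintype n] [DecidableEq n] {E : Matrix n n ℝ}
    (hE : E.IsHermitian) {c : ℝ} (h : ∀ r ∈ spectrum ℝ E, r ≤ c) (x : n → ℝ) :
    x ⬝ᵥ E *ᵥ x ≤ c * (x ⬝ᵥ x) := by
  have hF : (c • (1 : Matrix n n ℝ) - E).IsHermitian := by
    simp only [Matrix.IsHermitian, Matrix.conjTranspose_sub, Matrix.conjTranspose_smul]
    rw [Matrix.conjTranspose_one, hE]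
    simp
  have hpsd : (c • (1 : Matrix n n ℝ) - E).PosSemidef := by
    refine hF.posSemidef_iff_eigenvalues_nonneg.mpr fun i => ?_
    have hm := hF.eigenvalues_mem_spectrum_real i
    rw [specAux_shift] at hm
    have := h _ hm
    rw [Pi.zero_apply]
    linarith
  have hq := hpsd.re_dotProduct_nonneg x
  simp only [star_trivial, RCLike.re_to_real] at hq
  rw [Matrix.sub_mulVec, Matrix.smul_mulVec, Matrix.one_mulVec,
    dotProduct_sub, dotProduct_smul, smul_eq_mul] at hq
  linarith

lemma le_quadform_of_spectrum_ge {n : Type*} [Fintype n] [DecidableEq n] {E : Matrix n n ℝ}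
    (hE : E.IsHermitian) {c : ℝ} (h : ∀ r ∈ spectrum ℝ E, c ≤ r) (x : n → ℝ) :
    c * (x ⬝ᵥ x) ≤ x ⬝ᵥ E *ᵥ x := by
  have hE' : (-E).IsHermitian := by
    simp only [Matrix.IsHermitian, Matrix.conjTranspose_neg]
    rw [hE]
  have h' : ∀ r ∈ spectrum ℝ (-E), r ≤ -c := by
    intro r hr
    rw [specAux_mem_iff] at hr
    obtain ⟨v, hv, hvv⟩ := hr
    have : -r ∈ spectrum ℝ E := by
      rw [specAux_mem_iff]
      exact ⟨v, hv, by rw [Matrix.neg_mulVec] at hvv; rw [neg_smul, ← hvv, neg_neg]⟩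
    have := h _ this
    linarith
  have := quadform_le_of_spectrum_le hE' h' x
  rw [Matrix.neg_mulVec, dotProduct_neg] at this
  linarith

lemma posDef_of_spectrum_pos {n : Type*} [Fintype n] [DecidableEq n] {E : Matrix n n ℝ}
    (hE : E.IsHermitian) (h : ∀ r ∈ spectrum ℝ E, 0 < r) : E.PosDef := by
  have hpsd : E.PosSemidef :=
    hE.posSemidef_iff_eigenvalues_nonneg.mpr fun i => (h _ (hE.eigenvalues_mem_spectrum_real i)).le
  refine Matrix.PosDef.of_dotProduct_mulVec_pos hE fun x hx => ?_
  have h0 := hpsd.re_dotProduct_nonneg x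
  simp only [star_trivial, RCLike.re_to_real] at h0 ⊢
  rcases h0.lt_or_eq with h1 | h1
  · exact h1
  · exfalso
    have hz : E *ᵥ x = 0 := by
      have := (hpsd.dotProduct_mulVec_zero_iff x).mp (by rw [star_trivial, ← h1])
      exact this
    have : (0 : ℝ) ∈ spectrum ℝ E := by
      rw [specAux_mem_iff]
      exact ⟨x, hx, by rw [hz, zero_smul]⟩
    exact lt_irrefl 0 (h 0 this)

open MatrixOrder in
lemma coreAux {n : Type*} [Fintype n] [DecidableEq n] (P D : Matrix n n ℝ)
    (hP : P.IsSymm) (hD : D.PosDef)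
    (hP1 : ∀ x : n → ℝ, |x ⬝ᵥ P *ᵥ x| ≤ x ⬝ᵥ x)
    (dmax : ℝ) (hd0 : 0 ≤ dmax) (hub : ∀ r ∈ spectrum ℝ D, r ≤ dmax) :
    ∀ μ ∈ spectrum ℂ ((P * D).map Complex.ofReal), ‖μ‖ ≤ dmax := by
  intro μ hμ
  by_cases hμ0 : μ = 0
  · simpa [hμ0] using hd0
  set S := CFC.sqrt D with hSdef
  have hSS : S * S = D := CFC.sqrt_mul_sqrt_self D (Matrix.nonneg_iff_posSemidef.mpr hD.posSemidef)
  have hSH : S.IsHermitian := (Matrix.nonneg_iff_posSemidef.mp (CFC.sqrt_nonneg D)).isHermitian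
  have hSt : Sᵀ = S := by
    rw [← Matrix.conjTranspose_eq_transpose_of_trivial]; exact hSH
  have hmap : ∀ (A B : Matrix n n ℝ),
      (A * B).map Complex.ofReal = A.map Complex.ofReal * B.map Complex.ofReal := by
    intro A B
    exact Matrix.map_mul (f := Complex.ofRealHom)
  -- move spectrum to S * P * S
  have h2 : μ ∈ spectrum ℂ ((S * P * S).map Complex.ofReal) := by
    have hswap := spectrum.nonzero_mul_comm (𝕜 := ℂ) ((P * S).map Complex.ofReal)
      (S.map Complex.ofReal)
    have hmem : μ ∈ spectrum ℂ ((P * S).map Complex.ofReal * S.map Complex.ofReal) \ {0} := by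
      refine ⟨?_, hμ0⟩
      rw [← hmap, Matrix.mul_assoc, hSS]
      exact hμ
    rw [hswap] at hmem
    have := hmem.1
    rwa [← hmap, ← Matrix.mul_assoc] at this
  -- reality of μ
  have hMt : (S * P * S)ᵀ = S * P * S := by
    rw [Matrix.transpose_mul, Matrix.transpose_mul, hSt, hP, Matrix.mul_assoc]
  have hMH : ((S * P * S).map Complex.ofReal).IsHermitian := by
    rw [Matrix.IsHermitian, ← Matrix.conjTranspose_map Complex.ofReal
      (fun x => by simp [Complex.conj_ofReal]),
      Matrix.conjTranspose_eq_transpose_of_trivial, hMt]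
  obtain ⟨v, hv, hvv⟩ := (specAux_mem_iff _ _).mp h2
  have hc0 : dotProduct (star v) v ≠ 0 := fun h => hv (dotProduct_star_self_eq_zero.mp h)
  have hreal : (starRingEnd ℂ) μ = μ := by
    have hq : dotProduct (star v) (((S * P * S).map Complex.ofReal) *ᵥ v)
        = μ * dotProduct (star v) v := by
      rw [hvv, dotProduct_smul, smul_eq_mul]
    have hstar : star (dotProduct (star v) (((S * P * S).map Complex.ofReal) *ᵥ v))
        = dotProduct (star v) (((S * P * S).map Complex.ofReal) *ᵥ v) := by
      conv_lhs => rw [Matrix.star_dotProduct]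
      rw [star_star, Matrix.star_mulVec, hMH, Matrix.dotProduct_mulVec]
    have hcstar : star (dotProduct (star v) v) = dotProduct (star v) v := by
      simp [dotProduct, star_sum, mul_comm]
    rw [hq, star_mul', hcstar] at hstar
    exact mul_right_cancel₀ hc0 hstar
  obtain ⟨r, hr⟩ := Complex.conj_eq_iff_real.mp hreal
  subst hr
  -- real eigenvector
  have hrspec : r ∈ spectrum ℝ (S * P * S) := (specAux_real_iff _ _).mp h2
  obtain ⟨u, hu, huu⟩ := (specAux_mem_iff _ _).mp hrspec
  have hupos : 0 < dotProduct u u := by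
    rcases (Finset.sum_nonneg fun i _ => mul_self_nonneg (u i) :
        (0:ℝ) ≤ dotProduct u u).lt_or_eq with h | h
    · exact h
    · exact absurd (dotProduct_self_eq_zero.mp h.symm) hu
  have hvm : ∀ w : n → ℝ, w ᵥ* S = S *ᵥ w := fun w => by
    conv_lhs => rw [← hSt]
    rw [Matrix.vecMul_transpose]
  have i1 : dotProduct u ((S * P * S) *ᵥ u)
      = dotProduct (S *ᵥ u) (P *ᵥ (S *ᵥ u)) := by
    rw [Matrix.mul_assoc, ← Matrix.mulVec_mulVec, Matrix.dotProduct_mulVec, hvm,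
      ← Matrix.mulVec_mulVec]
  have i2 : dotProduct (S *ᵥ u) (S *ᵥ u) = dotProduct u (D *ᵥ u) := by
    rw [Matrix.dotProduct_mulVec, hvm, Matrix.mulVec_mulVec, hSS,
      dotProduct_comm]
  have i3 : dotProduct u ((S * P * S) *ᵥ u) = r * dotProduct u u := by
    rw [huu, dotProduct_smul, smul_eq_mul]
  have hDH : D.IsHermitian := hD.isHermitian
  have hbound : |r| * dotProduct u u ≤ dmax * dotProduct u u := by
    calc |r| * dotProduct u u = |r * dotProduct u u| := by
          rw [abs_mul, abs_of_nonneg hupos.le]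
      _ = |dotProduct (S *ᵥ u) (P *ᵥ (S *ᵥ u))| := by rw [← i3, i1]
      _ ≤ dotProduct (S *ᵥ u) (S *ᵥ u) := hP1 _
      _ = dotProduct u (D *ᵥ u) := i2
      _ ≤ dmax * dotProduct u u := quadform_le_of_spectrum_le hDH hub u
  have : |r| ≤ dmax := le_of_mul_le_mul_right hbound hupos
  simpa using this

lemma dotSelf_pos {n : Type*} [Fintype n] {v : n → ℝ} (hv : v ≠ 0) :
    0 < dotProduct v v := by
  rcases (Finset.sum_nonneg fun i _ => mul_self_nonneg (v i) :
      (0:ℝ) ≤ dotProduct v v).lt_or_eq with h | h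
  · exact h
  · exact absurd (dotProduct_self_eq_zero.mp h.symm) hv

lemma spectrum_pos_of_posDef {n : Type*} [Fintype n] [DecidableEq n] {D : Matrix n n ℝ}
    (hD : D.PosDef) {r : ℝ} (hr : r ∈ spectrum ℝ D) : 0 < r := by
  obtain ⟨v, hv, hvv⟩ := (specAux_mem_iff _ _).mp hr
  have h1 := hD.dotProduct_mulVec_pos hv
  rw [star_trivial, hvv, dotProduct_smul, smul_eq_mul] at h1
  have h2 := dotSelf_pos hv
  nlinarith

lemma quad_abs_le_of_norm {n : Type*} [Fintype n] [DecidableEq n] (P : Matrix n n ℝ)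
    (hPn : ‖Matrix.toEuclideanCLM (𝕜 := ℝ) P‖ ≤ 1) (x : n → ℝ) :
    |dotProduct x (P *ᵥ x)| ≤ dotProduct x x := by
  set x' : EuclideanSpace ℝ n := (WithLp.equiv 2 _).symm x with hx'
  have h1 : (Matrix.toEuclideanCLM (𝕜 := ℝ) P) x' = (WithLp.equiv 2 _).symm (P *ᵥ x) := by
    rw [hx']
    rfl
  have h2 : (inner ℝ x' ((Matrix.toEuclideanCLM (𝕜 := ℝ) P) x') : ℝ) = dotProduct x (P *ᵥ x) := by
    rw [h1, hx']
    show dotProduct (P *ᵥ x) (star x) = _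
    rw [star_trivial, dotProduct_comm]
  have h3 : (inner ℝ x' x' : ℝ) = dotProduct x x := by
    rw [hx']
    show dotProduct x (star x) = _
    rw [star_trivial]
  rw [← h2, ← h3]
  calc |(inner ℝ x' ((Matrix.toEuclideanCLM (𝕜 := ℝ) P) x') : ℝ)|
      ≤ ‖x'‖ * ‖(Matrix.toEuclideanCLM (𝕜 := ℝ) P) x'‖ := abs_real_inner_le_norm _ _
    _ ≤ ‖x'‖ * (‖Matrix.toEuclideanCLM (𝕜 := ℝ) P‖ * ‖x'‖) := by
        gcongr
        exact ContinuousLinearMap.le_opNorm _ _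
    _ ≤ ‖x'‖ * (1 * ‖x'‖) := by
        have h0 : (0:ℝ) ≤ ‖x'‖ := norm_nonneg _
        nlinarith [mul_le_mul_of_nonneg_left (mul_le_mul_of_nonneg_right hPn h0) h0]
    _ = ‖x'‖ * ‖x'‖ := by ring
    _ = (inner ℝ x' x' : ℝ) := (real_inner_self_eq_norm_mul_norm x').symm

lemma specAux_smul {n : Type*} [Fintype n] [DecidableEq n] (E : Matrix n n ℝ) {c : ℝ}
    (hc : c ≠ 0) (r : ℝ) : r ∈ spectrum ℝ (c • E) ↔ r / c ∈ spectrum ℝ E := by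
  rw [specAux_mem_iff, specAux_mem_iff]
  constructor
  · rintro ⟨v, hv, h⟩
    refine ⟨v, hv, ?_⟩
    rw [Matrix.smul_mulVec] at h
    rw [div_eq_inv_mul, ← smul_smul, ← h, inv_smul_smul₀ hc]
  · rintro ⟨v, hv, h⟩
    refine ⟨v, hv, ?_⟩
    rw [Matrix.smul_mulVec, h, smul_smul, mul_div_cancel₀ _ hc]

section Blocks

variable {K N : Type*} [Fintype K] [Fintype N] [DecidableEq K] [DecidableEq N]

lemma bd_mulVec (B : K → Matrix N N ℝ) (x : K × N → ℝ) (k : K) (i : N) :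
    ((((Matrix.blockDiagonal B).submatrix Prod.swap Prod.swap)) *ᵥ x) (k, i)
      = (B k *ᵥ fun j => x (k, j)) i := by
  simp only [Matrix.mulVec, dotProduct, Matrix.submatrix_apply, Prod.swap_prod_mk,
    Matrix.blockDiagonal_apply]
  rw [Fintype.sum_prod_type]
  simp [Finset.sum_ite_eq, ite_mul, zero_mul]

lemma bd_quad (B : K → Matrix N N ℝ) (x : K × N → ℝ) :
    dotProduct x ((((Matrix.blockDiagonal B).submatrix Prod.swap Prod.swap)) *ᵥ x)
      = ∑ k, dotProduct (fun j => x (k, j)) (B k *ᵥ fun j => x (k, j)) := by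
  simp only [dotProduct]
  rw [Fintype.sum_prod_type]
  refine Finset.sum_congr rfl fun k _ => Finset.sum_congr rfl fun i _ => ?_
  rw [bd_mulVec]

lemma kron_mulVec (L : Matrix K K ℝ) (x : K × N → ℝ) (k : K) (i : N) :
    ((Matrix.kroneckerMap (· * ·) L (1 : Matrix N N ℝ)) *ᵥ x) (k, i)
      = (L *ᵥ fun k' => x (k', i)) k := by
  simp only [Matrix.mulVec, dotProduct, Matrix.kroneckerMap_apply, Matrix.one_apply]
  rw [Fintype.sum_prod_type]
  simp [mul_ite, ite_mul, Finset.sum_ite_eq, mul_comm]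

lemma kron_quad (L : Matrix K K ℝ) (x : K × N → ℝ) :
    dotProduct x ((Matrix.kroneckerMap (· * ·) L (1 : Matrix N N ℝ)) *ᵥ x)
      = ∑ i : N, dotProduct (fun k => x (k, i)) (L *ᵥ fun k => x (k, i)) := by
  simp only [dotProduct]
  rw [Fintype.sum_prod_type, Finset.sum_comm]
  refine Finset.sum_congr rfl fun i _ => Finset.sum_congr rfl fun k _ => ?_
  rw [kron_mulVec]

lemma bd_isSymm {B : K → Matrix N N ℝ} (hB : ∀ k, (B k).IsSymm) :
    ((Matrix.blockDiagonal B).submatrix Prod.swap Prod.swap).IsSymm := by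
  have : (Matrix.blockDiagonal B).IsSymm := by
    rw [Matrix.IsSymm, Matrix.blockDiagonal_transpose]
    have h2 : (fun k => (B k)ᵀ) = B := funext fun k => hB k
    rw [h2]
  rw [Matrix.IsSymm]
  ext ⟨k, i⟩ ⟨k', j⟩
  simp only [Matrix.transpose_apply, Matrix.submatrix_apply]
  conv_lhs => rw [← this]
  simp

lemma kron_isSymm {L : Matrix K K ℝ} (hL : L.IsSymm) :
    (Matrix.kroneckerMap (· * ·) L (1 : Matrix N N ℝ)).IsSymm := by
  rw [Matrix.IsSymm]
  ext ⟨k, i⟩ ⟨k', j⟩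
  simp only [Matrix.transpose_apply, Matrix.kroneckerMap_apply, Matrix.one_apply]
  by_cases h : i = j
  · subst h
    simp [hL.apply]
  · simp [h, Ne.symm h, hL.apply]

end Blocks


/-- (i) For symmetric matrices `P, D` with operator norm `‖P‖ = 1` and `D`
positive definite, the spectral radius of `P * D` is at most `λ_max(D)`. (ii) Consequently,
in the cooperative LMS setting with `P = I - η (L ⊗ I_N)` and `D` block diagonal with blocks
`I - μ H_kᵀ H_k`, every eigenvalue of `P * D` is at most `1 - μ min_k λ_min(H_kᵀ H_k)`. -/
theorem spectral_radius_product_bound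
    (K m N : ℕ) (hK : 0 < K) (hN : 0 < N)
    (G : SimpleGraph (Fin K)) [DecidableRel G.Adj]
    (lmax : ℝ) (hlmax : IsGreatest (spectrum ℝ (G.lapMatrix ℝ)) lmax)
    (η : ℝ) (hη : 0 < η) (hηlt : η < 1 / lmax)
    (H : Fin K → Matrix (Fin m) (Fin N) ℝ)
    (μc : ℝ) (hμ : 0 < μc)
    (hspec : ∀ k : Fin K, ∀ x ∈ spectrum ℝ ((H k)ᵀ * H k), x < 1 / μc)
    (lmin : ℝ) (hlmin : IsLeast (⋃ k : Fin K, spectrum ℝ ((H k)ᵀ * H k)) lmin) :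
    (∀ (n : ℕ) (P D : Matrix (Fin n) (Fin n) ℝ), P.IsSymm → D.IsSymm → D.PosDef →
      ‖Matrix.toEuclideanCLM (𝕜 := ℝ) P‖ = 1 →
      ∀ dmax : ℝ, IsGreatest (spectrum ℝ D) dmax →
      ∀ μ ∈ spectrum ℂ ((P * D).map Complex.ofReal), ‖μ‖ ≤ dmax)
    ∧ (∀ μ ∈ spectrum ℝ
        ((((1 : Matrix (Fin K × Fin N) (Fin K × Fin N) ℝ)
              - η • (G.lapMatrix ℝ ⊗ₖ (1 : Matrix (Fin N) (Fin N) ℝ)))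
          * ((Matrix.blockDiagonal
              (fun k : Fin K => (1 : Matrix (Fin N) (Fin N) ℝ) - μc • ((H k)ᵀ * H k))).submatrix
                Prod.swap Prod.swap))),
        μ ≤ 1 - μc * lmin) := by
  constructor
  · intro n P D hPsymm _hDsymm hDpd hPnorm dmax hdmax μ hμ'
    exact coreAux P D hPsymm hDpd (quad_abs_le_of_norm P hPnorm.le) dmax
      (spectrum_pos_of_posDef hDpd hdmax.1).le (fun r hr => hdmax.2 hr) μ hμ'
  · intro μ hμmem
    set L := G.lapMatrix ℝ with hLdef
    set A : Fin K → Matrix (Fin N) (Fin N) ℝ := fun k => (H k)ᵀ * H k with hAdef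
    set B : Fin K → Matrix (Fin N) (Fin N) ℝ := fun k => 1 - μc • A k with hBdef
    set Pm : Matrix (Fin K × Fin N) (Fin K × Fin N) ℝ := 1 - η • (L ⊗ₖ 1) with hPmdef
    set Dm : Matrix (Fin K × Fin N) (Fin K × Fin N) ℝ :=
      (Matrix.blockDiagonal B).submatrix Prod.swap Prod.swap with hDmdef
    -- scalar facts
    have hlmaxpos : 0 < lmax := by
      by_contra hle
      push_neg at hle
      have h10 : 1 / lmax ≤ 0 := by
        rcases hle.lt_or_eq with h | h
        · exact (div_neg_of_pos_of_neg one_pos h).le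
        · simp [h]
      linarith
    have hηl1 : η * lmax < 1 := (lt_div_iff₀ hlmaxpos).mp hηlt
    have hLsymm : L.IsSymm := G.isSymm_lapMatrix ℝ
    have hLpsd : L.PosSemidef := SimpleGraph.posSemidef_lapMatrix ℝ G
    -- symmetry of Pm
    have hPmSymm : Pm.IsSymm := by
      rw [Matrix.IsSymm, hPmdef, Matrix.transpose_sub, Matrix.transpose_smul,
        Matrix.transpose_one, kron_isSymm hLsymm]
    -- quadratic form bound for Pm
    have hP1 : ∀ x : Fin K × Fin N → ℝ, |dotProduct x (Pm *ᵥ x)| ≤ dotProduct x x := by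
      intro x
      have hxx : 0 ≤ dotProduct x x := Finset.sum_nonneg fun i _ => mul_self_nonneg _
      have hq : dotProduct x (Pm *ᵥ x)
          = dotProduct x x - η * dotProduct x ((L ⊗ₖ 1) *ᵥ x) := by
        rw [hPmdef, Matrix.sub_mulVec, Matrix.one_mulVec, Matrix.smul_mulVec,
          dotProduct_sub, dotProduct_smul, smul_eq_mul]
      have hq0 : 0 ≤ dotProduct x ((L ⊗ₖ 1) *ᵥ x) := by
        rw [kron_quad]
        refine Finset.sum_nonneg fun i _ => ?_
        simpa [star_trivial] using hLpsd.re_dotProduct_nonneg (fun k => x (k, i))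
      have hqle : dotProduct x ((L ⊗ₖ 1) *ᵥ x) ≤ lmax * dotProduct x x := by
        rw [kron_quad]
        have hsum : ∑ i : Fin N, lmax * dotProduct (fun k => x (k, i)) (fun k => x (k, i))
            = lmax * dotProduct x x := by
          rw [← Finset.mul_sum]
          congr 1
          simp only [dotProduct]
          rw [Fintype.sum_prod_type, Finset.sum_comm]
        refine le_trans (Finset.sum_le_sum fun i _ =>
          quadform_le_of_spectrum_le hLpsd.isHermitian (fun r hr => hlmax.2 hr) _) hsum.le
      rw [hq, abs_le]
      constructor <;> nlinarith
    -- blocks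
    have hAkH : ∀ k, (A k).IsHermitian := fun k => by
      have h := Matrix.isHermitian_conjTranspose_mul_self (H k)
      rwa [Matrix.conjTranspose_eq_transpose_of_trivial] at h
    have hBkH : ∀ k, (B k).IsHermitian := fun k => by
      rw [Matrix.IsHermitian, hBdef, Matrix.conjTranspose_sub, Matrix.conjTranspose_smul,
        Matrix.conjTranspose_one, hAkH k, star_trivial]
    have hBspec : ∀ k r, r ∈ spectrum ℝ (B k) → (1 - r) / μc ∈ spectrum ℝ (A k) := by
      intro k r hr
      have h1 : r ∈ spectrum ℝ ((1:ℝ) • (1 : Matrix (Fin N) (Fin N) ℝ) - μc • A k) := by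
        rwa [one_smul]
      rw [specAux_shift] at h1
      rwa [specAux_smul _ (ne_of_gt hμ)] at h1
    have hBkPD : ∀ k, (B k).PosDef := by
      intro k
      refine posDef_of_spectrum_pos (hBkH k) fun r hr => ?_
      have h2 := hspec k _ (hBspec k r hr)
      rw [div_lt_div_iff₀ hμ hμ] at h2
      nlinarith
    -- Dm facts
    have hDmSymm : Dm.IsSymm := bd_isSymm fun k => by
      rw [Matrix.IsSymm, ← Matrix.conjTranspose_eq_transpose_of_trivial]
      exact hBkH k
    have hDmPD : Dm.PosDef := by
      refine Matrix.PosDef.of_dotProduct_mulVec_pos ?_ fun x hx => ?_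
      · rw [Matrix.IsHermitian, Matrix.conjTranspose_eq_transpose_of_trivial]
        exact hDmSymm
      · rw [star_trivial, hDmdef, bd_quad]
        obtain ⟨⟨k0, i0⟩, hki⟩ := Function.ne_iff.mp hx
        refine Finset.sum_pos' (fun k _ => ?_) ⟨k0, Finset.mem_univ _, ?_⟩
        · simpa [star_trivial] using (hBkPD k).posSemidef.re_dotProduct_nonneg (fun j => x (k, j))
        · have hxk : (fun j => x (k0, j)) ≠ 0 := fun h => hki (congrFun h i0)
          simpa [star_trivial] using (hBkPD k0).dotProduct_mulVec_pos hxk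
    have hub : ∀ r ∈ spectrum ℝ Dm, r ≤ 1 - μc * lmin := by
      intro r hr
      obtain ⟨x, hx, hxx⟩ := (specAux_mem_iff _ _).mp hr
      obtain ⟨⟨k0, i0⟩, hki⟩ := Function.ne_iff.mp hx
      have hxk : (fun j => x (k0, j)) ≠ 0 := fun h => hki (congrFun h i0)
      have hBx : B k0 *ᵥ (fun j => x (k0, j)) = r • (fun j => x (k0, j)) := by
        funext j
        have h1 := bd_mulVec B x k0 j
        rw [hxx] at h1
        calc (B k0 *ᵥ fun j => x (k0, j)) j = (r • x) (k0, j) := h1.symm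
          _ = (r • fun j => x (k0, j)) j := rfl
      have hrk : r ∈ spectrum ℝ (B k0) := (specAux_mem_iff _ _).mpr ⟨_, hxk, hBx⟩
      have h3 := hlmin.2 (Set.mem_iUnion.mpr ⟨k0, hBspec k0 r hrk⟩)
      rw [le_div_iff₀ hμ] at h3
      linarith
    have hd0 : 0 ≤ 1 - μc * lmin := by
      obtain ⟨s, ⟨k0, rfl⟩, hk0⟩ := hlmin.1
      have h4 := hspec k0 _ hk0
      rw [lt_div_iff₀ hμ] at h4
      nlinarith
    have hmem : (↑μ : ℂ) ∈ spectrum ℂ ((Pm * Dm).map Complex.ofReal) :=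
      (specAux_real_iff _ _).mpr hμmem
    have hfin := coreAux Pm Dm hPmSymm hDmPD hP1 (1 - μc * lmin) hd0 hub _ hmem
    rw [Complex.norm_real] at hfin
    exact le_trans (le_abs_self μ) hfin
end

section
/- Let B be symmetric with all eigenvalues in [a,b], 0 < a < b, and let ω_0,…,ω_{T−1} be the Chebyshev PSOR factors for [a,b]. Then the spectral radius of ∏_{k=0}^{T−1}(I − ω_k B) is at most 1/|C_T((b+a)/(b−a))| < 1. -/
open Matrix Real

lemma myT_natDegree_le : ∀ m : ℕ, (Polynomial.Chebyshev.T ℝ (m:ℤ)).natDegree ≤ m := by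
  intro m
  induction m using Nat.twoStepInduction with
  | zero => simp [Polynomial.Chebyshev.T_zero]
  | one => simpa [Polynomial.Chebyshev.T_one] using Polynomial.natDegree_X_le
  | more m ih1 ih2 =>
    rw [show ((m+2:ℕ):ℤ) = (m:ℤ)+2 by push_cast; ring, Polynomial.Chebyshev.T_add_two]
    refine le_trans (Polynomial.natDegree_sub_le _ _) (max_le ?_ (by omega))
    refine le_trans (Polynomial.natDegree_mul_le) ?_
    have h1 : ((2:Polynomial ℝ)*Polynomial.X).natDegree ≤ 1 :=
      le_trans Polynomial.natDegree_mul_le (by simp)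
    have := ih2
    rw [show ((m:ℤ)+1) = ((m+1:ℕ):ℤ) by push_cast; ring]
    omega

lemma myT_cosh (t : ℝ) (m : ℤ) :
    (Polynomial.Chebyshev.T ℝ m).eval (Real.cosh t) = Real.cosh (m * t) := by
  have h := Polynomial.Chebyshev.T_complex_cos ((t:ℂ) * Complex.I) m
  rw [Complex.cos_mul_I] at h
  have h2 : ((Real.cosh t : ℝ) : ℂ) = Complex.cosh t := Complex.ofReal_cosh t
  rw [← h2, ← Polynomial.Chebyshev.complex_ofReal_eval_T] at h
  have h3 : (m : ℂ) * ((t:ℂ) * Complex.I) = ((m * t : ℝ) : ℂ) * Complex.I := by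
    push_cast; ring
  rw [h3, Complex.cos_mul_I, ← Complex.ofReal_cosh] at h
  exact_mod_cast h

lemma cheb_root (T : ℕ) (hT : 1 ≤ T) (k : Fin T) :
    (Polynomial.Chebyshev.T ℝ (T:ℤ)).eval (Real.cos ((2*(k:ℕ)+1)*π/(2*T))) = 0 := by
  rw [Polynomial.Chebyshev.T_real_cos]
  have hT0 : (T:ℝ) ≠ 0 := Nat.cast_ne_zero.mpr (by omega)
  have : ((T:ℤ):ℝ) * ((2*(k:ℕ)+1)*π/(2*T)) = (2*(k:ℕ)+1) * π / 2 := by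
    push_cast; field_simp
  rw [this]
  rw [Real.cos_eq_zero_iff]
  exact ⟨(k:ℕ), by push_cast; ring⟩

lemma cheb_inj (T : ℕ) (hT : 1 ≤ T) :
    Function.Injective (fun k : Fin T => Real.cos ((2*(k:ℕ)+1)*π/(2*T))) := by
  intro j k h
  have hT0 : (0:ℝ) < (T:ℝ) := by exact_mod_cast Nat.pos_of_ne_zero (by omega)
  have hmem : ∀ i : Fin T, (2*(i:ℕ)+1)*π/(2*T) ∈ Set.Icc 0 π := by
    intro i
    have h1 : ((i:ℕ):ℝ) + 1 ≤ (T:ℝ) := by exact_mod_cast i.isLt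
    constructor
    · positivity
    · rw [div_le_iff₀ (by positivity)]
      nlinarith [Real.pi_pos]
  have := Real.injOn_cos (hmem j) (hmem k) h
  field_simp at this
  exact Fin.ext (by have h : ((j:ℕ):ℝ) = (k:ℕ) := by linarith
                    exact_mod_cast h)

lemma cheb_factor (T : ℕ) (hT : 1 ≤ T) :
    ∃ L : ℝ, L ≠ 0 ∧ ∀ y : ℝ,
      (Polynomial.Chebyshev.T ℝ (T:ℤ)).eval y
        = L * ∏ k : Fin T, (y - Real.cos ((2*(k:ℕ)+1)*π/(2*T))) := by
  set p := Polynomial.Chebyshev.T ℝ (T:ℤ) with hp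
  set f : Fin T → ℝ := fun k => Real.cos ((2*(k:ℕ)+1)*π/(2*T)) with hf
  have hp0 : p ≠ 0 := by
    intro h
    have := Polynomial.Chebyshev.T_real_cos 0 (T:ℤ)
    rw [← hp, h] at this
    simp at this
  have hinj := cheb_inj T hT
  set s : Finset ℝ := Finset.image f Finset.univ with hs
  have hcard : s.card = T := by
    rw [hs, Finset.card_image_of_injective _ hinj]; simp
  have hsub : s.val ≤ p.roots := by
    rw [Multiset.le_iff_subset s.nodup]
    intro x hx
    rw [Finset.mem_val, hs, Finset.mem_image] at hx
    obtain ⟨k, -, rfl⟩ := hx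
    rw [Polynomial.mem_roots hp0]
    exact cheb_root T hT k
  have hdegle : p.natDegree ≤ T := myT_natDegree_le T
  have hrootsle : p.roots.card ≤ p.natDegree := p.card_roots'
  have hcards : s.val.card = T := hcard
  have hroots_eq : p.roots = s.val := by
    symm
    apply Multiset.eq_of_le_of_card_le hsub
    calc Multiset.card p.roots ≤ p.natDegree := hrootsle
    _ ≤ T := hdegle
    _ = Multiset.card s.val := hcards.symm
  have hndeg : p.natDegree = T := by
    have h5 := Multiset.card_le_card hsub
    exact le_antisymm hdegle (by rw [← hcards]; exact le_trans h5 hrootsle)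
  have hsplits : p.Splits := by
    rw [Polynomial.splits_iff_card_roots, hroots_eq, hcards, hndeg]
  refine ⟨p.leadingCoeff, Polynomial.leadingCoeff_ne_zero.mpr hp0, fun y => ?_⟩
  conv_lhs => rw [Polynomial.Splits.eq_prod_roots hsplits]
  rw [Polynomial.eval_mul, Polynomial.eval_C, Polynomial.eval_multiset_prod, hroots_eq]
  congr 1
  rw [Multiset.map_map]
  have h1 : ((fun q => Polynomial.eval y q) ∘ fun a : ℝ => Polynomial.X - Polynomial.C a)
      = fun a : ℝ => y - a := by
    funext a; simp
  rw [h1]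
  rw [show (Multiset.map (fun a : ℝ => y - a) s.val).prod = s.prod (fun a => y - a) from rfl]
  rw [hs, Finset.prod_image (fun a _ b _ h => hinj h)]

lemma cheb_sym (T : ℕ) (hT : 1 ≤ T) (y : ℝ) :
    ∏ k : Fin T, (y + Real.cos ((2*(k:ℕ)+1)*π/(2*T)))
      = ∏ k : Fin T, (y - Real.cos ((2*(k:ℕ)+1)*π/(2*T))) := by
  apply Fintype.prod_bijective Fin.rev (Fin.rev_involutive.bijective)
  intro k
  have hk := k.isLt
  have hrev : ((k.rev : ℕ) : ℝ) = (T:ℝ) - 1 - (k:ℕ) := by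
    rw [Fin.val_rev]
    have : (k:ℕ) + 1 ≤ T := hk
    push_cast [Nat.cast_sub this]
    ring
  have hT0 : (T:ℝ) ≠ 0 := Nat.cast_ne_zero.mpr (by omega)
  have harg : (2*((k.rev:ℕ):ℝ)+1)*π/(2*T) = π - (2*((k:ℕ):ℝ)+1)*π/(2*T) := by
    rw [hrev]; field_simp; ring
  rw [harg, Real.cos_pi_sub]
  ring

lemma cosh_exists (c : ℝ) (hc : 1 < c) : ∃ t : ℝ, 0 < t ∧ Real.cosh t = c := by
  have h2 : c ≤ Real.cosh (2*c) := by
    rw [Real.cosh_eq]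
    have h3 := Real.add_one_le_exp (2*c)
    have h4 : (0:ℝ) < Real.exp (-(2*c)) := Real.exp_pos _
    linarith
  have hsub := intermediate_value_Icc (by linarith : (0:ℝ) ≤ 2*c)
    (Real.continuous_cosh.continuousOn)
  have hc_mem : c ∈ Set.Icc (Real.cosh 0) (Real.cosh (2*c)) := by
    rw [Real.cosh_zero]; exact ⟨le_of_lt hc, h2⟩
  obtain ⟨t, ht, hco⟩ := hsub hc_mem
  refine ⟨t, ?_, hco⟩
  rcases lt_or_eq_of_le ht.1 with h | h
  · exact h
  · exfalso; rw [← h] at hco; rw [Real.cosh_zero] at hco; linarith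

lemma key_bound (a b : ℝ) (ha : 0 < a) (hab : a < b) (T : ℕ) (hT : 1 ≤ T) (ω : ℕ → ℝ)
    (hω : ∀ k < T,
      ω k = ((b + a) / 2 + ((b - a) / 2) * Real.cos ((2 * k + 1) * π / (2 * T)))⁻¹) :
    (∀ lam ∈ Set.Icc a b, |∏ k : Fin T, (1 - ω (k:ℕ) * lam)|
        ≤ 1 / |(Polynomial.Chebyshev.T ℝ (T:ℤ)).eval ((b + a) / (b - a))|)
    ∧ 1 / |(Polynomial.Chebyshev.T ℝ (T:ℤ)).eval ((b + a) / (b - a))| < 1 := by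
  set p := Polynomial.Chebyshev.T ℝ (T:ℤ) with hp
  set c : ℝ := (b + a) / (b - a) with hc
  set r : ℝ := (b - a) / 2 with hr
  set m : ℝ := (b + a) / 2 with hm
  have hr0 : 0 < r := by rw [hr]; linarith
  have hc1 : 1 < c := by
    rw [hc, lt_div_iff₀ (by linarith)]; linarith
  have hba : b - a ≠ 0 := by linarith
  have hmrc : r * c = m := by rw [hr, hc, hm]; field_simp
  -- eval at c is > 1
  obtain ⟨t, ht0, hct⟩ := cosh_exists c hc1
  have hpc : 1 < p.eval c := by
    rw [← hct, hp, myT_cosh]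
    rw [Real.one_lt_cosh]
    have : (0:ℝ) < ((T:ℤ):ℝ) * t := by
      apply mul_pos _ ht0
      exact_mod_cast Nat.pos_of_ne_zero (by omega)
    linarith [this]
  have habs : |p.eval c| = p.eval c := abs_of_pos (by linarith)
  constructor
  · intro lam hlam
    obtain ⟨L, hL0, hLe⟩ := cheb_factor T hT
    set x : ℝ := (m - lam) / r with hx
    set f : Fin T → ℝ := fun k => Real.cos ((2*(k:ℕ)+1)*π/(2*T)) with hfd
    have hf1 : ∀ k : Fin T, |f k| ≤ 1 := fun k => Real.abs_cos_le_one _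
    have hd : ∀ k : Fin T, m + r * f k ≠ 0 := by
      intro k
      have := abs_le.mp (hf1 k)
      have : -r ≤ r * f k := by nlinarith [this.1]
      have hma : m - r = a := by rw [hm, hr]; ring
      nlinarith
    have hωk : ∀ k : Fin T, ω (k:ℕ) = (m + r * f k)⁻¹ := by
      intro k
      rw [hω (k:ℕ) k.isLt, hm, hr, hfd]
    -- rewrite each factor
    have hfac : ∀ k : Fin T, 1 - ω (k:ℕ) * lam = (m + r * f k - lam) * (m + r * f k)⁻¹ := by
      intro k
      rw [hωk k]
      have hdk := hd k
      field_simp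
    rw [Finset.prod_congr rfl (fun k _ => hfac k), Finset.prod_mul_distrib]
    rw [Finset.prod_inv_distrib]
    -- numerator
    have hnum : ∏ k : Fin T, (m + r * f k - lam) = r^T * (p.eval x / L) := by
      have : ∀ k : Fin T, m + r * f k - lam = r * (x + f k) := by
        intro k; rw [hx]; field_simp; ring
      rw [Finset.prod_congr rfl (fun k _ => this k), Finset.prod_mul_distrib,
        Finset.prod_const, Finset.card_univ, Fintype.card_fin]
      rw [hfd, cheb_sym T hT x, hp, hLe x]
      field_simp
      refine Finset.prod_congr rfl fun k _ => ?_
      ring_nf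
    have hden : ∏ k : Fin T, (m + r * f k) = r^T * (p.eval c / L) := by
      have : ∀ k : Fin T, m + r * f k = r * (c + f k) := by
        intro k; rw [← hmrc]; ring
      rw [Finset.prod_congr rfl (fun k _ => this k), Finset.prod_mul_distrib,
        Finset.prod_const, Finset.card_univ, Fintype.card_fin]
      rw [hfd, cheb_sym T hT c, hp, hLe c]
      field_simp
      refine Finset.prod_congr rfl fun k _ => ?_
      ring_nf
    rw [hnum, hden]
    have hpc0 : p.eval c ≠ 0 := by linarith
    have hrT : (r:ℝ)^T ≠ 0 := pow_ne_zero _ (ne_of_gt hr0)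
    have heq : r^T * (p.eval x / L) * (r^T * (p.eval c / L))⁻¹ = p.eval x / p.eval c := by
      field_simp
    rw [heq, abs_div, habs]
    have hx1 : |x| ≤ 1 := by
      rw [hx, abs_div, abs_of_pos hr0, div_le_one hr0]
      rw [abs_le]
      have hma : m - r = a := by rw [hm, hr]; ring
      have hmb : m + r = b := by rw [hm, hr]; ring
      constructor <;> [linarith [hlam.2]; linarith [hlam.1]]
    have hcosx : |p.eval x| ≤ 1 := by
      have hx2 := abs_le.mp hx1
      have : x = Real.cos (Real.arccos x) := (Real.cos_arccos hx2.1 hx2.2).symm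
      rw [this, hp, Polynomial.Chebyshev.T_real_cos]
      exact Real.abs_cos_le_one _
    gcongr <;> linarith [hcosx]
  · rw [habs, div_lt_one (by linarith)]
    exact hpc

lemma list_prod_conj {A : Type*} [Ring A] (U V : A) (hUV : U * V = 1) (hVU : V * U = 1) :
    ∀ l : List A, (l.map fun M => U * M * V).prod = U * l.prod * V := by
  intro l
  induction l with
  | nil => simp [hUV]
  | cons M l ih =>
    rw [List.map_cons, List.prod_cons, List.prod_cons, ih]
    rw [mul_assoc (U*M) V (U * l.prod * V)]
    rw [show V * (U * l.prod * V) = (V * U) * (l.prod * V) by rw [mul_assoc, mul_assoc], hVU,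
      one_mul, ← mul_assoc, ← mul_assoc, mul_assoc U M l.prod]

lemma diag_list {n : ℕ} : ∀ (T : ℕ) (g : Fin T → Fin n → ℝ),
    (List.ofFn fun k => Matrix.diagonal (g k)).prod
      = Matrix.diagonal (fun i => ∏ k, g k i)
  | 0, g => by simp
  | (T+1), g => by
    rw [List.ofFn_succ, List.prod_cons, diag_list T (fun k => g k.succ),
      Matrix.diagonal_mul_diagonal]
    simp only [Fin.prod_univ_succ]

/-- Let `B` be symmetric with all eigenvalues in `[a, b]`, `0 < a < b`, and
let `ω_0, …, ω_{T-1}` be the Chebyshev PSOR factors for `[a, b]`. Then every eigenvalue of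
`∏_{k=0}^{T-1} (I - ω_k B)` has absolute value at most `1 / |C_T((b+a)/(b-a))|`, which is
less than `1`. -/
theorem chebyshev_PSOR_spectral_radius_lt_one
    (n : ℕ) (a b : ℝ) (ha : 0 < a) (hab : a < b)
    (B : Matrix (Fin n) (Fin n) ℝ) (hB : B.IsSymm)
    (hspec : spectrum ℝ B ⊆ Set.Icc a b)
    (T : ℕ) (hT : 1 ≤ T) (ω : ℕ → ℝ)
    (hω : ∀ k < T,
      ω k = ((b + a) / 2 + ((b - a) / 2) * Real.cos ((2 * k + 1) * π / (2 * T)))⁻¹) :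
    (∀ μ ∈ spectrum ℝ
        ((List.ofFn fun k : Fin T =>
          (1 : Matrix (Fin n) (Fin n) ℝ) - ω k • B).prod),
      |μ| ≤ 1 / |(Polynomial.Chebyshev.T ℝ T).eval ((b + a) / (b - a))|)
    ∧ 1 / |(Polynomial.Chebyshev.T ℝ T).eval ((b + a) / (b - a))| < 1 := by
  obtain ⟨hkb, hlt⟩ := key_bound a b ha hab T hT ω hω
  refine ⟨?_, hlt⟩
  intro μ hμ
  have hH : B.IsHermitian := by
    rw [Matrix.IsHermitian]
    ext i j
    rw [Matrix.conjTranspose_apply]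
    simpa using congrFun (congrFun hB i) j
  classical
  set ev := hH.eigenvalues with hev
  set Uc : Matrix (Fin n) (Fin n) ℝ := (hH.eigenvectorUnitary : Matrix (Fin n) (Fin n) ℝ)
    with hUc
  have hUV : Uc * star Uc = 1 := (Matrix.mem_unitaryGroup_iff).mp hH.eigenvectorUnitary.2
  have hVU : star Uc * Uc = 1 := (Matrix.mem_unitaryGroup_iff').mp hH.eigenvectorUnitary.2
  have hst : B = Uc * Matrix.diagonal ev * star Uc := by
    have := hH.spectral_theorem
    rw [Unitary.conjStarAlgAut_apply] at this
    exact this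
  have hfac : ∀ k : Fin T, (1 : Matrix (Fin n) (Fin n) ℝ) - ω k • B
      = Uc * ((1 : Matrix (Fin n) (Fin n) ℝ) - ω k • Matrix.diagonal ev) * star Uc := by
    intro k
    rw [Matrix.mul_sub, Matrix.sub_mul, mul_one, hUV, Matrix.mul_smul, Matrix.smul_mul, ← hst]
  have hlist : (List.ofFn fun k : Fin T => (1 : Matrix (Fin n) (Fin n) ℝ) - ω k • B)
      = (List.ofFn fun k : Fin T =>
          (1 : Matrix (Fin n) (Fin n) ℝ) - ω k • Matrix.diagonal ev).map
        (fun M => Uc * M * star Uc) := by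
    rw [List.map_ofFn]
    congr 1
    funext k
    exact hfac k
  have hdiagk : ∀ k : Fin T, (1 : Matrix (Fin n) (Fin n) ℝ) - ω (k:ℕ) • Matrix.diagonal ev
      = Matrix.diagonal (fun i => 1 - ω (k:ℕ) * ev i) := by
    intro k
    rw [← Matrix.diagonal_one, ← Matrix.diagonal_smul, ← Matrix.diagonal_sub]
    rfl
  have hprod : (List.ofFn fun k : Fin T => (1 : Matrix (Fin n) (Fin n) ℝ) - ω k • B).prod
      = Uc * Matrix.diagonal (fun i => ∏ k : Fin T, (1 - ω (k:ℕ) * ev i)) * star Uc := by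
    rw [hlist, list_prod_conj _ _ hUV hVU]
    congr 2
    rw [show (List.ofFn fun k : Fin T => (1 : Matrix (Fin n) (Fin n) ℝ) - ω k • Matrix.diagonal ev)
        = List.ofFn fun k : Fin T => Matrix.diagonal (fun i => 1 - ω (k:ℕ) * ev i) by
      congr 1; funext k; exact hdiagk k]
    exact diag_list T _
  rw [hprod] at hμ
  have hconj : spectrum ℝ (Uc * Matrix.diagonal (fun i => ∏ k : Fin T, (1 - ω (k:ℕ) * ev i))
        * star Uc)
      = spectrum ℝ (Matrix.diagonal (fun i => ∏ k : Fin T, (1 - ω (k:ℕ) * ev i))) :=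
    Unitary.spectrum_star_right_conjugate (U := hH.eigenvectorUnitary)
  rw [hconj, spectrum_diagonal] at hμ
  obtain ⟨i, rfl⟩ := hμ
  exact hkb (ev i) (hspec (hH.eigenvalues_mem_spectrum_real i))
end
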